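/- Let G ∈ ℝ^{d×n} be a matrix with G𝟙 = 0, and let σ² = Tr(GᵀG). Let β be a random vector in ℝ^n with E[β] = 𝟙 and r := (1/n)E[|β − 𝟙|₂²], and let ρ be an independent uniformly random permutation of coordinates. Then E[|G·ρ^{-1}(β)|₂²] ≤ r(1 + 1/(n−1))·σ². -/

import Mathlib

open MeasureTheory Finset Matrix

private lemma exists_perm_pair {n : ℕ} (i j i' j' : Fin n) (h : i ≠ j) (h' : i' ≠ j') :
    ∃ τ : Equiv.Perm (Fin n), τ i = i' ∧ τ j = j' := by
  refine ⟨(Equiv.swap (Equiv.swap i i' j) j') * Equiv.swap i i', ?_, ?_⟩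
  · simp only [Equiv.Perm.mul_apply, Equiv.swap_apply_left]
    refine Equiv.swap_apply_of_ne_of_ne (fun hc => h ?_) h'
    exact (Equiv.swap i i').injective (by rw [Equiv.swap_apply_left]; exact hc)
  · simp only [Equiv.Perm.mul_apply, Equiv.swap_apply_left]

/-- Let `G ∈ ℝ^{d×n}` with `G 𝟙 = 0` and `σsq = Tr(GᵀG)`. Let `β` be a
random vector with `E[β] = 𝟙` and `r = (1/n) E[|β - 𝟙|₂²]`, and let `ρ` be an independent
uniformly random permutation of the coordinates (the expectation below averages uniformly
over all permutations). Then `E[|G ρ⁻¹(β)|₂²] ≤ r (1 + 1/(n-1)) σsq`. -/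
theorem stmt17 {Ω : Type*} [MeasurableSpace Ω] (μ : Measure Ω) [IsProbabilityMeasure μ]
    (n d : ℕ) (hn : 2 ≤ n)
    (G : Matrix (Fin d) (Fin n) ℝ)
    (hG1 : G.mulVec (fun _ => 1) = 0)
    (σsq : ℝ) (hσ : σsq = ∑ k, ∑ i, G k i ^ 2)
    (β : Ω → Fin n → ℝ) (hβmeas : Measurable β)
    (hmean : ∀ i, ∫ ω, β ω i ∂μ = 1)
    (hint : ∀ i j, Integrable (fun ω => β ω i * β ω j) μ)
    (r : ℝ) (hr : r = (1 / n : ℝ) * ∫ ω, ∑ i, (β ω i - 1) ^ 2 ∂μ) :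
    ((n.factorial : ℝ))⁻¹ * ∑ σ : Equiv.Perm (Fin n),
        ∫ ω, ∑ k, (G.mulVec (fun i => β ω (σ⁻¹ i)) k) ^ 2 ∂μ
      ≤ r * (1 + 1 / ((n : ℝ) - 1)) * σsq := by
  have hn0 : (0:ℝ) < (n:ℝ) := by
    have : 0 < n := by omega
    exact_mod_cast this
  have hn1 : (0:ℝ) < (n:ℝ) - 1 := by
    have : (2:ℝ) ≤ (n:ℝ) := by exact_mod_cast hn
    linarith
  set F : ℝ := (n.factorial : ℝ) with hF
  have hF0 : (0:ℝ) < F := by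
    rw [hF]
    exact_mod_cast Nat.factorial_pos n
  set C : Fin n → Fin n → ℝ := fun p q => ∫ ω, β ω p * β ω q ∂μ with hC
  set S : ℝ := ∑ p, C p p with hS
  set T : ℝ := ∑ p, ∑ q, C p q with hT
  -- measurability / integrability of coordinates
  have hβm : ∀ p, Measurable fun ω => β ω p := fun p => (measurable_pi_apply p).comp hβmeas
  have hβint : ∀ p, Integrable (fun ω => β ω p) μ := by
    intro p
    have hg : Integrable (fun ω => (1 + β ω p * β ω p) / 2) μ :=
      ((integrable_const 1).add (hint p p)).div_const 2
    refine hg.mono' (hβm p).aestronglyMeasurable (Filter.Eventually.of_forall fun ω => ?_)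
    rw [Real.norm_eq_abs]
    nlinarith [sq_nonneg (|β ω p| - 1), sq_abs (β ω p), abs_nonneg (β ω p)]
  -- key: per-σ integral
  have key : ∀ σ : Equiv.Perm (Fin n),
      ∫ ω, ∑ k, (G.mulVec (fun i => β ω (σ⁻¹ i)) k) ^ 2 ∂μ
      = ∑ k, ∑ i, ∑ j, G k i * G k j * C (σ⁻¹ i) (σ⁻¹ j) := by
    intro σ
    have hptw : ∀ ω, ∑ k, (G.mulVec (fun i => β ω (σ⁻¹ i)) k) ^ 2
        = ∑ k, ∑ i, ∑ j, G k i * G k j * (β ω (σ⁻¹ i) * β ω (σ⁻¹ j)) := by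
      intro ω
      refine Finset.sum_congr rfl fun k _ => ?_
      rw [Matrix.mulVec, dotProduct, sq, Finset.sum_mul_sum]
      exact Finset.sum_congr rfl fun i _ => Finset.sum_congr rfl fun j _ => by ring
    have hI : ∀ (p q : Fin n) (c : ℝ), Integrable (fun ω => c * (β ω p * β ω q)) μ :=
      fun p q c => (hint p q).const_mul c
    simp_rw [hptw]
    rw [integral_finset_sum _ (fun k _ => integrable_finset_sum _
      (fun i _ => integrable_finset_sum _ (fun j _ => hI _ _ _)))]
    refine Finset.sum_congr rfl fun k _ => ?_
    rw [integral_finset_sum _ (fun i _ => integrable_finset_sum _ (fun j _ => hI _ _ _))]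
    refine Finset.sum_congr rfl fun i _ => ?_
    rw [integral_finset_sum _ (fun j _ => hI _ _ _)]
    exact Finset.sum_congr rfl fun j _ => integral_const_mul _ _

  have hcard : (Finset.univ : Finset (Equiv.Perm (Fin n))).card = n.factorial := by
    simp [Finset.card_univ, Fintype.card_perm, Fintype.card_fin]
  have hconst_diag : ∀ i i' : Fin n, (∑ σ : Equiv.Perm (Fin n), C (σ i) (σ i))
      = ∑ σ : Equiv.Perm (Fin n), C (σ i') (σ i') := by
    intro i i'
    have h := Equiv.sum_comp (Equiv.mulRight (Equiv.swap i' i))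
      (fun σ : Equiv.Perm (Fin n) => C (σ i) (σ i))
    simpa [Equiv.coe_mulRight, Equiv.Perm.mul_apply, Equiv.swap_apply_right] using h.symm
  have hdiagsum : ∑ i' : Fin n, (∑ σ : Equiv.Perm (Fin n), C (σ i') (σ i')) = F * S := by
    rw [Finset.sum_comm]
    have hin : ∀ σ : Equiv.Perm (Fin n), ∑ i', C (σ i') (σ i') = S := by
      intro σ; rw [hS]; exact Equiv.sum_comp σ (fun p => C p p)
    rw [Finset.sum_congr rfl fun σ _ => hin σ, Finset.sum_const, hcard, nsmul_eq_mul, hF]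
  have hDiag : ∀ i : Fin n, (n:ℝ) * (∑ σ : Equiv.Perm (Fin n), C (σ i) (σ i)) = F * S := by
    intro i
    have h1 : ∑ i' : Fin n, (∑ σ : Equiv.Perm (Fin n), C (σ i') (σ i'))
        = (n:ℝ) * ∑ σ : Equiv.Perm (Fin n), C (σ i) (σ i) := by
      rw [Finset.sum_congr rfl fun i' _ => hconst_diag i' i, Finset.sum_const,
        Finset.card_univ, Fintype.card_fin, nsmul_eq_mul]
    rw [← h1, hdiagsum]
  have hconst_off : ∀ i j i' j' : Fin n, i ≠ j → i' ≠ j' →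
      (∑ σ : Equiv.Perm (Fin n), C (σ i) (σ j)) = ∑ σ : Equiv.Perm (Fin n), C (σ i') (σ j') := by
    intro i j i' j' h h'
    obtain ⟨τ, hτi, hτj⟩ := exists_perm_pair i' j' i j h' h
    have hh := Equiv.sum_comp (Equiv.mulRight τ)
      (fun σ : Equiv.Perm (Fin n) => C (σ i') (σ j'))
    simp only [Equiv.coe_mulRight, Equiv.Perm.mul_apply, hτi, hτj] at hh
    exact hh
  have hfullsum : ∑ i' : Fin n, ∑ j' : Fin n, ∑ σ : Equiv.Perm (Fin n), C (σ i') (σ j')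
      = F * T := by
    rw [Finset.sum_congr rfl fun i' (_ : i' ∈ Finset.univ) =>
      (Finset.sum_comm : ∑ j' : Fin n, ∑ σ : Equiv.Perm (Fin n), C (σ i') (σ j')
        = ∑ σ : Equiv.Perm (Fin n), ∑ j' : Fin n, C (σ i') (σ j'))]
    rw [Finset.sum_comm]
    have hin : ∀ σ : Equiv.Perm (Fin n), ∑ i', ∑ j', C (σ i') (σ j') = T := by
      intro σ
      rw [hT, ← Equiv.sum_comp σ (fun p => ∑ q, C p q)]
      exact Finset.sum_congr rfl fun i' _ => Equiv.sum_comp σ (fun q => C (σ i') q)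
    rw [Finset.sum_congr rfl fun σ _ => hin σ, Finset.sum_const, hcard, nsmul_eq_mul, hF]
  have hOff : ∀ i j : Fin n, i ≠ j →
      (n:ℝ) * ((n:ℝ)-1) * (∑ σ : Equiv.Perm (Fin n), C (σ i) (σ j)) = F * (T - S) := by
    intro i j hij
    have h1 : ∑ i' : Fin n, ∑ j' ∈ Finset.univ.erase i',
        (∑ σ : Equiv.Perm (Fin n), C (σ i') (σ j'))
        = (n:ℝ) * (((n:ℝ)-1) * ∑ σ : Equiv.Perm (Fin n), C (σ i) (σ j)) := by
      have hrowc : ∀ i' : Fin n, ∑ j' ∈ Finset.univ.erase i',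
          (∑ σ : Equiv.Perm (Fin n), C (σ i') (σ j'))
          = ((n:ℝ)-1) * ∑ σ : Equiv.Perm (Fin n), C (σ i) (σ j) := by
        intro i'
        rw [Finset.sum_congr rfl (fun j' hj' =>
          hconst_off i' j' i j (Ne.symm (Finset.mem_erase.mp hj').1) hij)]
        rw [Finset.sum_const, Finset.card_erase_of_mem (Finset.mem_univ i'),
          Finset.card_univ, Fintype.card_fin, nsmul_eq_mul,
          Nat.cast_sub (by omega : 1 ≤ n), Nat.cast_one]
      rw [Finset.sum_congr rfl fun i' _ => hrowc i', Finset.sum_const,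
        Finset.card_univ, Fintype.card_fin, nsmul_eq_mul]
    have h2 : ∑ i' : Fin n, ∑ j' ∈ Finset.univ.erase i',
        (∑ σ : Equiv.Perm (Fin n), C (σ i') (σ j')) = F * (T - S) := by
      have e1 : ∀ i' : Fin n, ∑ j' ∈ Finset.univ.erase i',
          (∑ σ : Equiv.Perm (Fin n), C (σ i') (σ j'))
          = (∑ j' : Fin n, ∑ σ : Equiv.Perm (Fin n), C (σ i') (σ j'))
            - (∑ σ : Equiv.Perm (Fin n), C (σ i') (σ i')) := by
        intro i'
        rw [← Finset.sum_erase_add _ _ (Finset.mem_univ i')]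
        ring
      rw [Finset.sum_congr rfl fun i' _ => e1 i', Finset.sum_sub_distrib,
        hfullsum, hdiagsum]
      ring
    rw [← mul_assoc] at h1
    rw [← h1, h2]
  have hinv : ∀ i j : Fin n, (∑ σ : Equiv.Perm (Fin n), C (σ⁻¹ i) (σ⁻¹ j))
      = ∑ σ : Equiv.Perm (Fin n), C (σ i) (σ j) := by
    intro i j
    exact Equiv.sum_comp (Equiv.inv (Equiv.Perm (Fin n))) (fun σ => C (σ i) (σ j))
  have hA : ∀ i j : Fin n, F⁻¹ * ∑ σ : Equiv.Perm (Fin n), C (σ⁻¹ i) (σ⁻¹ j)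
      = if i = j then S / n else (T - S) / ((n:ℝ) * ((n:ℝ)-1)) := by
    intro i j
    rw [hinv i j]
    by_cases h : i = j
    · subst h; rw [if_pos rfl]
      have hd := hDiag i
      field_simp
      linear_combination hd
    · rw [if_neg h]
      have ho := hOff i j h
      field_simp
      linear_combination ho

  have hrow : ∀ k, ∑ j, G k j = 0 := by
    intro k
    have h := congrFun hG1 k
    simpa [Matrix.mulVec, dotProduct] using h
  set a : ℝ := S / (n:ℝ) with ha
  set b : ℝ := (T - S) / ((n:ℝ) * ((n:ℝ)-1)) with hb
  have hk : ∀ k, F⁻¹ * ∑ σ : Equiv.Perm (Fin n), ∑ i, ∑ j,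
      G k i * G k j * C (σ⁻¹ i) (σ⁻¹ j) = (a - b) * ∑ i, (G k i)^2 := by
    intro k
    have h1 : ∑ σ : Equiv.Perm (Fin n), ∑ i, ∑ j, G k i * G k j * C (σ⁻¹ i) (σ⁻¹ j)
        = ∑ i, ∑ j, G k i * G k j * ∑ σ : Equiv.Perm (Fin n), C (σ⁻¹ i) (σ⁻¹ j) := by
      rw [Finset.sum_comm]
      refine Finset.sum_congr rfl fun i _ => ?_
      rw [Finset.sum_comm]
      refine Finset.sum_congr rfl fun j _ => ?_
      rw [Finset.mul_sum]
    rw [h1, Finset.mul_sum]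
    have h2 : ∀ i, F⁻¹ * ∑ j, G k i * G k j * ∑ σ : Equiv.Perm (Fin n), C (σ⁻¹ i) (σ⁻¹ j)
        = ∑ j, G k i * G k j * (if i = j then a else b) := by
      intro i
      rw [Finset.mul_sum]
      refine Finset.sum_congr rfl fun j _ => ?_
      rw [← hA i j]; ring
    rw [Finset.sum_congr rfl fun i _ => h2 i]
    have h3 : ∀ i, ∑ j, G k i * G k j * (if i = j then a else b)
        = G k i * G k i * (a - b) := by
      intro i
      have hpt : ∀ j, G k i * G k j * (if i = j then a else b)
          = G k i * G k j * b + (if i = j then G k i * G k j * (a - b) else 0) := by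
        intro j; by_cases h : i = j <;> simp [h] <;> ring
      rw [Finset.sum_congr rfl fun j _ => hpt j, Finset.sum_add_distrib,
        Finset.sum_ite_eq Finset.univ i (fun j => G k i * G k j * (a - b)),
        if_pos (Finset.mem_univ i)]
      have hz : ∑ j, G k i * G k j * b = G k i * b * ∑ j, G k j := by
        rw [Finset.mul_sum]; exact Finset.sum_congr rfl fun j _ => by ring
      rw [hz, hrow k]; ring
    rw [Finset.sum_congr rfl fun i _ => h3 i, Finset.mul_sum]
    exact Finset.sum_congr rfl fun i _ => by ring
  have hLHS : F⁻¹ * (∑ σ : Equiv.Perm (Fin n),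
      ∫ ω, ∑ k, (G.mulVec (fun i => β ω (σ⁻¹ i)) k) ^ 2 ∂μ) = (a - b) * σsq := by
    rw [Finset.sum_congr rfl fun σ _ => key σ, Finset.sum_comm, Finset.mul_sum]
    rw [Finset.sum_congr rfl fun k _ => hk k, ← Finset.mul_sum, hσ]
  rw [hLHS]
  -- scalar facts
  have hSr : S = (n:ℝ) * r + n := by
    have hint1 : ∀ i : Fin n, ∫ ω, (β ω i - 1)^2 ∂μ = C i i - 1 := by
      intro i
      have hfe : (fun ω => (β ω i - 1)^2) = fun ω => (β ω i * β ω i - 2 * β ω i) + 1 := by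
        funext ω; ring
      have hI1 : Integrable (fun ω => β ω i * β ω i - 2 * β ω i) μ := by
        exact (hint i i).sub ((hβint i).const_mul 2)
      have hI2 : Integrable (fun ω => 2 * β ω i) μ := by
        exact (hβint i).const_mul 2
      rw [hfe, integral_add hI1 (integrable_const 1), integral_sub (hint i i) hI2,
        integral_const_mul]
      simp only [hmean i, hC, mul_one, integral_const, measure_univ, ENNReal.toReal_one, smul_eq_mul, one_mul, probReal_univ]
      ring
    have hsum : ∫ ω, ∑ i, (β ω i - 1)^2 ∂μ = S - n := by
      have hintsq : ∀ i : Fin n, Integrable (fun ω => (β ω i - 1)^2) μ := by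
        intro i
        have hfe : (fun ω => (β ω i - 1)^2) = fun ω => (β ω i * β ω i - 2 * β ω i) + 1 := by
          funext ω; ring
        rw [hfe]
        exact ((hint i i).sub ((hβint i).const_mul 2)).add (integrable_const 1)
      rw [integral_finset_sum _ fun i _ => hintsq i,
        Finset.sum_congr rfl fun i _ => hint1 i, Finset.sum_sub_distrib, hS]
      simp
    rw [hr, hsum]
    field_simp
    ring
  have hTn : (n:ℝ)^2 ≤ T := by
    have hX2 : (fun ω => (∑ p, β ω p)^2) = fun ω => ∑ p, ∑ q, β ω p * β ω q := by
      funext ω; rw [sq, Finset.sum_mul_sum]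
    have hX2int : Integrable (fun ω => (∑ p, β ω p)^2) μ := by
      rw [hX2]
      exact integrable_finset_sum _ fun p _ => integrable_finset_sum _ fun q _ => hint p q
    have hXint : Integrable (fun ω => ∑ p, β ω p) μ :=
      integrable_finset_sum _ fun p _ => hβint p
    have hmX : ∫ ω, (∑ p, β ω p) ∂μ = n := by
      rw [integral_finset_sum _ fun p _ => hβint p]
      simp [hmean]
    have hmX2 : ∫ ω, (∑ p, β ω p)^2 ∂μ = T := by
      rw [hX2, integral_finset_sum _ (fun p _ => integrable_finset_sum _ fun q _ => hint p q),
        hT]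
      exact Finset.sum_congr rfl fun p _ => integral_finset_sum _ fun q _ => hint p q
    have h0 : 0 ≤ ∫ ω, ((∑ p, β ω p) - n)^2 ∂μ := integral_nonneg fun ω => sq_nonneg _
    have hexp : ∫ ω, ((∑ p, β ω p) - n)^2 ∂μ = T - (n:ℝ)^2 := by
      have hfe : (fun ω => ((∑ p, β ω p) - n)^2)
          = fun ω => ((∑ p, β ω p)^2 - (2*(n:ℝ)) * (∑ p, β ω p)) + (n:ℝ)^2 := by
        funext ω; ring
      have hI1 : Integrable (fun ω => (∑ p, β ω p)^2 - (2*(n:ℝ)) * (∑ p, β ω p)) μ := by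
        exact hX2int.sub (hXint.const_mul _)
      have hI2 : Integrable (fun ω => (2*(n:ℝ)) * (∑ p, β ω p)) μ := by
        exact hXint.const_mul _
      rw [hfe, integral_add hI1 (integrable_const _), integral_sub hX2int hI2,
        integral_const_mul, hmX, hmX2]
      simp; ring
    linarith [hexp ▸ h0]
  have hc : a - b ≤ r * (1 + 1/((n:ℝ)-1)) := by
    have key2 : r * (1 + 1/((n:ℝ)-1)) - (a - b) = (T - (n:ℝ)^2)/((n:ℝ) * ((n:ℝ)-1)) := by
      rw [ha, hb, hSr]
      field_simp
      ring
    have hnn : 0 ≤ (T - (n:ℝ)^2)/((n:ℝ) * ((n:ℝ)-1)) :=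
      div_nonneg (by linarith) (le_of_lt (mul_pos hn0 hn1))
    linarith [key2 ▸ hnn]
  have hσ0 : 0 ≤ σsq := by rw [hσ]; positivity
  exact mul_le_mul_of_nonneg_right hc hσ0
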